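/- Fix β > 0, Δ ∈ ℝ, p ∈ [0,1], and (x_1,x_2) with 0 < |x_1| < x_2 < 1. Define W(y_1,y_2) = x_1y_1 + x_2y_2 − p log(1 + 2 e^{y_2+βΔ} cosh y_1) − (1−p) log(1 + 2 e^{y_2−βΔ} cosh y_1) + p log(1+2e^{βΔ}) + (1−p) log(1+2e^{−βΔ}). If (y_1*, y_2*) is a critical point of W (both partial derivatives vanish), then tanh(y_1*) = x_1/x_2, and the quantity z = 2 e^{y_2*} cosh(y_1*) satisfies x_2/z = p e^{βΔ}/(1 + z e^{βΔ}) + (1−p) e^{−βΔ}/(1 + z e^{−βΔ}). -/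

import Mathlib

noncomputable section

lemma logcosh (c : ℝ) (hc : 0 < c) (t : ℝ) :
    HasDerivAt (fun t => Real.log (1 + c * Real.cosh t))
      (c * Real.sinh t / (1 + c * Real.cosh t)) t := by
  have h : HasDerivAt (fun t => 1 + c * Real.cosh t) (c * Real.sinh t) t :=
    ((Real.hasDerivAt_cosh t).const_mul c).const_add 1
  have hpos : (0:ℝ) < 1 + c * Real.cosh t := by nlinarith [Real.cosh_pos t]
  simpa [div_eq_mul_inv, mul_comm] using h.log (ne_of_gt hpos)

lemma logexp (d : ℝ) (hd : 0 < d) (t : ℝ) :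
    HasDerivAt (fun t => Real.log (1 + d * Real.exp t))
      (d * Real.exp t / (1 + d * Real.exp t)) t := by
  have h : HasDerivAt (fun t => 1 + d * Real.exp t) (d * Real.exp t) t :=
    ((Real.hasDerivAt_exp t).const_mul d).const_add 1
  have hpos : (0:ℝ) < 1 + d * Real.exp t := by positivity
  simpa [div_eq_mul_inv, mul_comm] using h.log (ne_of_gt hpos)

/-- The function `W` for the Blume-Capel model with bimodal random crystal field. -/
def Wdis (β Δ p x₁ x₂ : ℝ) (y : ℝ × ℝ) : ℝ :=
  x₁ * y.1 + x₂ * y.2 -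
    p * Real.log (1 + 2 * Real.exp (y.2 + β * Δ) * Real.cosh y.1) -
    (1 - p) * Real.log (1 + 2 * Real.exp (y.2 - β * Δ) * Real.cosh y.1) +
    p * Real.log (1 + 2 * Real.exp (β * Δ)) +
    (1 - p) * Real.log (1 + 2 * Real.exp (-(β * Δ)))

/-- At any critical point `(y₁*, y₂*)` of `W` one has `tanh y₁* = x₁/x₂`, and
`z = 2 e^{y₂*} cosh y₁*` satisfies
`x₂/z = p e^{βΔ}/(1+z e^{βΔ}) + (1−p) e^{−βΔ}/(1+z e^{−βΔ})`. -/
theorem critical_point_W_dis (β Δ p x₁ x₂ : ℝ) (hβ : 0 < β) (hp0 : 0 ≤ p) (hp1 : p ≤ 1)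
    (hx : 0 < |x₁|) (hxx : |x₁| < x₂) (hx1 : x₂ < 1) (y₁s y₂s : ℝ)
    (hcrit : fderiv ℝ (Wdis β Δ p x₁ x₂) (y₁s, y₂s) = 0) :
    Real.tanh y₁s = x₁ / x₂ ∧
    ∀ z : ℝ, z = 2 * Real.exp y₂s * Real.cosh y₁s →
      x₂ / z = p * Real.exp (β * Δ) / (1 + z * Real.exp (β * Δ)) +
        (1 - p) * Real.exp (-(β * Δ)) / (1 + z * Real.exp (-(β * Δ))) := by
  set c1 : ℝ := 2 * Real.exp (y₂s + β * Δ) with hc1def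
  set c2 : ℝ := 2 * Real.exp (y₂s - β * Δ) with hc2def
  have hc1 : 0 < c1 := by positivity
  have hc2 : 0 < c2 := by positivity
  have hcosh : 0 < Real.cosh y₁s := Real.cosh_pos y₁s
  have hD1 : (0:ℝ) < 1 + c1 * Real.cosh y₁s := by nlinarith
  have hD2 : (0:ℝ) < 1 + c2 * Real.cosh y₁s := by nlinarith
  -- differentiability
  have hdiff : DifferentiableAt ℝ (Wdis β Δ p x₁ x₂) (y₁s, y₂s) := by
    have hlog1 : DifferentiableAt ℝ
        (fun y : ℝ × ℝ => Real.log (1 + 2 * Real.exp (y.2 + β * Δ) * Real.cosh y.1))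
        (y₁s, y₂s) := by
      apply DifferentiableAt.log
      · exact (differentiableAt_const _).add
          ((((differentiableAt_snd.add_const _).exp).const_mul 2).mul differentiableAt_fst.cosh)
      · exact ne_of_gt hD1
    have hlog2 : DifferentiableAt ℝ
        (fun y : ℝ × ℝ => Real.log (1 + 2 * Real.exp (y.2 - β * Δ) * Real.cosh y.1))
        (y₁s, y₂s) := by
      apply DifferentiableAt.log
      · exact (differentiableAt_const _).add
          ((((differentiableAt_snd.sub_const _).exp).const_mul 2).mul differentiableAt_fst.cosh)
      · exact ne_of_gt hD2
    unfold Wdis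
    exact (((((differentiableAt_fst.const_mul x₁).add
      (differentiableAt_snd.const_mul x₂)).sub (hlog1.const_mul p)).sub
      (hlog2.const_mul (1 - p))).add_const _).add_const _
  have hF : HasFDerivAt (Wdis β Δ p x₁ x₂) 0 (y₁s, y₂s) := hcrit ▸ hdiff.hasFDerivAt
  -- partial derivative in y₁
  have h1 : HasDerivAt (fun t => Wdis β Δ p x₁ x₂ (t, y₂s))
      (x₁ - p * (c1 * Real.sinh y₁s / (1 + c1 * Real.cosh y₁s)) -
        (1 - p) * (c2 * Real.sinh y₁s / (1 + c2 * Real.cosh y₁s))) y₁s := by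
    have ha : HasDerivAt (fun t : ℝ => x₁ * t) x₁ y₁s := by
      simpa using (hasDerivAt_id y₁s).const_mul x₁
    have hb := (logcosh c1 hc1 y₁s).const_mul p
    have hc := (logcosh c2 hc2 y₁s).const_mul (1 - p)
    have := ((((ha.add_const (x₂ * y₂s)).sub hb).sub hc).add_const
      (p * Real.log (1 + 2 * Real.exp (β * Δ)))).add_const
      ((1 - p) * Real.log (1 + 2 * Real.exp (-(β * Δ))))
    simpa [Wdis, hc1def, hc2def] using this
  have hzero1 : HasDerivAt (fun t => Wdis β Δ p x₁ x₂ (t, y₂s)) 0 y₁s := by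
    have hemb : HasDerivAt (fun t : ℝ => ((t, y₂s) : ℝ × ℝ)) (1, 0) y₁s :=
      (hasDerivAt_id y₁s).prodMk (hasDerivAt_const y₁s y₂s)
    have hcomp := hF.comp_hasDerivAt y₁s hemb
    simp at hcomp
    exact hcomp
  have eq1 := h1.unique hzero1
  -- partial derivative in y₂
  set d1 : ℝ := 2 * Real.exp (β * Δ) * Real.cosh y₁s with hd1def
  set d2 : ℝ := 2 * Real.exp (-(β * Δ)) * Real.cosh y₁s with hd2def
  have hd1 : 0 < d1 := by positivity
  have hd2 : 0 < d2 := by positivity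
  have h2 : HasDerivAt (fun t => Wdis β Δ p x₁ x₂ (y₁s, t))
      (x₂ - p * (d1 * Real.exp y₂s / (1 + d1 * Real.exp y₂s)) -
        (1 - p) * (d2 * Real.exp y₂s / (1 + d2 * Real.exp y₂s))) y₂s := by
    have ha : HasDerivAt (fun t : ℝ => x₂ * t) x₂ y₂s := by
      simpa using (hasDerivAt_id y₂s).const_mul x₂
    have hb := (logexp d1 hd1 y₂s).const_mul p
    have hc := (logexp d2 hd2 y₂s).const_mul (1 - p)
    have h := ((((ha.const_add (x₁ * y₁s)).sub hb).sub hc).add_const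
      (p * Real.log (1 + 2 * Real.exp (β * Δ)))).add_const
      ((1 - p) * Real.log (1 + 2 * Real.exp (-(β * Δ))))
    have hfun : (fun t : ℝ => Wdis β Δ p x₁ x₂ (y₁s, t)) =
        (fun t : ℝ => x₁ * y₁s + x₂ * t - p * Real.log (1 + d1 * Real.exp t) -
          (1 - p) * Real.log (1 + d2 * Real.exp t) +
          p * Real.log (1 + 2 * Real.exp (β * Δ)) +
          (1 - p) * Real.log (1 + 2 * Real.exp (-(β * Δ)))) := by
      funext t
      simp only [Wdis, hd1def, hd2def]
      rw [Real.exp_add, Real.exp_sub]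
      ring_nf
      rw [Real.exp_neg]
      ring
    rw [hfun]
    simpa using h
  have hzero2 : HasDerivAt (fun t => Wdis β Δ p x₁ x₂ (y₁s, t)) 0 y₂s := by
    have hemb : HasDerivAt (fun t : ℝ => ((y₁s, t) : ℝ × ℝ)) (0, 1) y₂s :=
      (hasDerivAt_const y₂s y₁s).prodMk (hasDerivAt_id y₂s)
    have hcomp := hF.comp_hasDerivAt y₂s hemb
    simp at hcomp
    exact hcomp
  have eq2 := h2.unique hzero2
  -- relate d's with c's: d1 * exp y₂s = c1 * cosh y₁s etc.
  have hrel1 : d1 * Real.exp y₂s = c1 * Real.cosh y₁s := by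
    simp only [hd1def, hc1def, Real.exp_add]; ring
  have hrel2 : d2 * Real.exp y₂s = c2 * Real.cosh y₁s := by
    simp only [hd2def, hc2def, Real.exp_sub, Real.exp_neg]
    field_simp
  rw [hrel1, hrel2] at eq2
  have hx2 : 0 < x₂ := lt_trans hx hxx
  field_simp at eq1 eq2
  constructor
  · -- tanh part
    rw [Real.tanh_eq_sinh_div_cosh]
    rw [div_eq_div_iff (ne_of_gt hcosh) (ne_of_gt hx2)]
    have key1 : (x₁ * Real.cosh y₁s - x₂ * Real.sinh y₁s) *
        ((1 + c1 * Real.cosh y₁s) * (1 + c2 * Real.cosh y₁s)) = 0 := by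
      linear_combination Real.cosh y₁s * eq1 - Real.sinh y₁s * eq2
    rcases mul_eq_zero.mp key1 with h | h
    · linarith
    · linarith [mul_pos hD1 hD2]
  · intro z hz
    have hzpos : 0 < z := by rw [hz]; positivity
    have hzc1 : z * Real.exp (β * Δ) = c1 * Real.cosh y₁s := by
      rw [hz, hc1def, Real.exp_add]; ring
    have hzc2 : z * Real.exp (-(β * Δ)) = c2 * Real.cosh y₁s := by
      rw [hz, hc2def, Real.exp_sub, Real.exp_neg]
      field_simp
    have key : x₂ * ((1 + c1 * Real.cosh y₁s) * (1 + c2 * Real.cosh y₁s)) =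
        (p * Real.exp (β * Δ) * (1 + c2 * Real.cosh y₁s) +
          (1 - p) * Real.exp (-(β * Δ)) * (1 + c1 * Real.cosh y₁s)) * z := by
      linear_combination eq2 - p * (1 + c2 * Real.cosh y₁s) * hzc1 -
        (1 - p) * (1 + c1 * Real.cosh y₁s) * hzc2
    rw [hzc1, hzc2]
    rw [div_add_div _ _ (ne_of_gt hD1) (ne_of_gt hD2),
      div_eq_div_iff (ne_of_gt hzpos) (by positivity)]
    linear_combination key


end
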